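/- arXiv:2210.03503 — 2 statements merged into one kernel-verified Lean document; each statement's English description precedes it below -/
import Mathlib

section
/- Let n ≥ 2 be an integer and let f be a continuous, not identically zero, positive definite function on ℝ that is n-divisible. If the essential support S_f = {x ∈ ℝ : f(x) ≠ 0} is connected, then there is exactly one g ∈ PD(ℝ) with g(x)^n = f(x) for all x ∈ ℝ, i.e., D_n(f) has exactly one element. -/
open Complex MeasureTheory Set Pointwise ComplexOrder

noncomputable section

/-- `f : ℝ → ℂ` is positive definite. -/
def IsPosDefFn (f : ℝ → ℂ) : Prop :=
  ∀ (m : ℕ) (x : Fin m → ℝ) (c : Fin m → ℂ),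
    0 ≤ ∑ j, ∑ k, f (x j - x k) * c j * (starRingEnd ℂ) (c k)

/-- `f ∈ PD(ℝ)`: continuous, not identically zero, positive definite. -/
def MemPD (f : ℝ → ℂ) : Prop :=
  Continuous f ∧ (∃ x, f x ≠ 0) ∧ IsPosDefFn f

/-- The essential support `S_f`. -/
def essSupp (f : ℝ → ℂ) : Set ℝ := {x | f x ≠ 0}

/-- `D_n(f) = {g ∈ PD(ℝ) : g^n = f}`. -/
def Dset (n : ℕ) (f : ℝ → ℂ) : Set (ℝ → ℂ) :=
  {g | MemPD g ∧ ∀ x, g x ^ n = f x}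

/-- The set of connected components of `S ⊆ ℝ`. -/
def comps (S : Set ℝ) : Set (Set ℝ) :=
  {C | ∃ x ∈ S, C = connectedComponentIn S x}

lemma pd_zero_nonneg {f : ℝ → ℂ} (hpd : IsPosDefFn f) : 0 ≤ f 0 := by
  have := hpd 1 ![0] ![1]
  simpa using this

lemma pd_two {f : ℝ → ℂ} (hpd : IsPosDefFn f) (t : ℝ) (c₂ : ℂ) :
    0 ≤ f 0 + f (-t) * (starRingEnd ℂ) c₂ + (f t * c₂ + f 0 * c₂ * (starRingEnd ℂ) c₂) := by
  have := hpd 2 ![0, t] ![1, c₂]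
  simpa [Fin.sum_univ_two, mul_comm, mul_assoc, mul_left_comm] using this

lemma pd_hermitian {f : ℝ → ℂ} (hpd : IsPosDefFn f) (t : ℝ) :
    f (-t) = (starRingEnd ℂ) (f t) := by
  have h0 : (f 0).im = 0 := ((Complex.le_def).mp (pd_zero_nonneg hpd)).2.symm
  have h1 := (Complex.le_def).mp (pd_two hpd t 1)
  have h2 := (Complex.le_def).mp (pd_two hpd t Complex.I)
  apply Complex.ext
  · have := h2.2
    simp [Complex.add_im, Complex.mul_im, Complex.conj_im, Complex.conj_re, h0] at this
    simp [Complex.conj_re]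
    linarith
  · have := h1.2
    simp [Complex.add_im, h0] at this
    simp [Complex.conj_im]
    linarith

lemma pd_zero_of_zero {f : ℝ → ℂ} (hpd : IsPosDefFn f) (h0 : f 0 = 0) (t : ℝ) : f t = 0 := by
  have key := (Complex.le_def).mp (pd_two hpd t (-(starRingEnd ℂ) (f t)))
  have hherm := pd_hermitian hpd t
  have hre := key.1
  rw [h0, hherm] at hre
  simp [Complex.add_re, Complex.mul_re, Complex.conj_re, Complex.conj_im] at hre
  have : (f t).re ^ 2 + (f t).im ^ 2 ≤ 0 := by nlinarith
  have hr : (f t).re = 0 := by nlinarith [sq_nonneg (f t).re, sq_nonneg (f t).im]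
  have hi : (f t).im = 0 := by nlinarith [sq_nonneg (f t).re, sq_nonneg (f t).im]
  exact Complex.ext hr hi

/-- two nonneg complex numbers with equal nonzero-index powers are equal -/
lemma eq_of_pow_eq_nonneg {a b : ℂ} (ha : 0 ≤ a) (hb : 0 ≤ b) {n : ℕ} (hn : n ≠ 0)
    (h : a ^ n = b ^ n) : a = b := by
  have haim : a.im = 0 := ((Complex.le_def.mp ha).2).symm
  have hbim : b.im = 0 := ((Complex.le_def.mp hb).2).symm
  obtain ⟨x, hx, rfl⟩ : ∃ x : ℝ, 0 ≤ x ∧ a = (x : ℂ) :=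
    ⟨a.re, (Complex.le_def.mp ha).1, Complex.ext rfl (by simp [haim])⟩
  obtain ⟨y, hy, rfl⟩ : ∃ y : ℝ, 0 ≤ y ∧ b = (y : ℂ) :=
    ⟨b.re, (Complex.le_def.mp hb).1, Complex.ext rfl (by simp [hbim])⟩
  have : (x : ℂ) ^ n = (y : ℂ) ^ n := h
  rw [← Complex.ofReal_pow, ← Complex.ofReal_pow, Complex.ofReal_inj] at this
  exact congrArg _ (pow_left_injective hx hy hn this)
  where
    pow_left_injective {x y : ℝ} (hx : 0 ≤ x) (hy : 0 ≤ y) (hn : n ≠ 0) (h : x ^ n = y ^ n) :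
        x = y := by
      rcases lt_trichotomy x y with hlt | heq | hgt
      · exact absurd h (ne_of_lt (pow_lt_pow_left₀ hlt hx hn))
      · exact heq
      · exact absurd h.symm (ne_of_lt (pow_lt_pow_left₀ hgt hy hn))

theorem Dset_unique_of_connected (n : ℕ) (hn : 2 ≤ n) (f : ℝ → ℂ)
    (hf : MemPD f) (hdiv : (Dset n f).Nonempty)
    (hconn : IsConnected (essSupp f)) :
    ∃! g : ℝ → ℂ, g ∈ Dset n f := by
  obtain ⟨g, hg⟩ := hdiv
  refine ⟨g, hg, fun h hh => ?_⟩
  obtain ⟨⟨hgc, _, hgpd⟩, hgn⟩ := hg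
  obtain ⟨⟨hhc, _, hhpd⟩, hhn⟩ := hh
  have hn0 : n ≠ 0 := by omega
  -- f 0 ≠ 0
  have hf0 : f 0 ≠ 0 := by
    intro h0
    obtain ⟨t, ht⟩ := hf.2.1
    exact ht (pd_zero_of_zero hf.2.2 h0 t)
  have h0S : (0 : ℝ) ∈ essSupp f := hf0
  -- g 0 = h 0
  have hg0h0 : h 0 = g 0 :=
    eq_of_pow_eq_nonneg (pd_zero_nonneg hhpd) (pd_zero_nonneg hgpd) hn0
      ((hhn 0).trans (hgn 0).symm)
  have hg0ne : g 0 ≠ 0 := fun hz => hf0 (by rw [← hgn 0, hz, zero_pow hn0])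
  -- g nonvanishing on S
  have hgne : ∀ x ∈ essSupp f, g x ≠ 0 := fun x hx hz =>
    hx (by rw [← hgn x, hz, zero_pow hn0])
  -- the ratio h/g maps S into the n-th roots of unity, a finite set
  set T : Set ℂ := {z : ℂ | z ^ n = 1} with hT
  have hTfin : T.Finite := by
    apply Set.Finite.subset (Polynomial.nthRoots n (1 : ℂ)).toFinset.finite_toSet
    intro z hz
    have : z ∈ Polynomial.nthRoots n (1 : ℂ) :=
      (Polynomial.mem_nthRoots (by omega : 0 < n)).mpr hz
    simpa using this
  haveI : Finite T := hTfin.to_subtype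
  haveI : DiscreteTopology T := inferInstance
  have hmaps : MapsTo (fun x => h x / g x) (essSupp f) T := by
    intro x hx
    have : (h x / g x) ^ n = 1 := by
      rw [div_pow, hhn, hgn, div_self hx]
    exact this
  have hcont : ContinuousOn (fun x => h x / g x) (essSupp f) :=
    (hhc.continuousOn).div (hgc.continuousOn) (fun x hx => hgne x hx)
  have hconst : ∀ x ∈ essSupp f, h x / g x = h 0 / g 0 := fun x hx =>
    hconn.isPreconnected.constant_of_mapsTo hTfin.isDiscrete hcont hmaps hx h0S
  funext x
  by_cases hx : x ∈ essSupp f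
  · have := hconst x hx
    rw [hg0h0, div_self hg0ne] at this
    exact (div_eq_one_iff_eq (hgne x hx)).mp this
  · have hfx : f x = 0 := not_not.mp hx
    have hgx : g x = 0 := pow_eq_zero_iff hn0 |>.mp (by rw [hgn, hfx])
    have hhx : h x = 0 := pow_eq_zero_iff hn0 |>.mp (by rw [hhn, hfx])
    rw [hgx, hhx]
end
end

section
/- Let Λ₁(x) = max{1 − |x|, 0}, v₁(x) = Λ₁(x − π − 1) + Λ₁(x − 2π + 1), and v₂(x) = Λ₁(x − 11) + Λ₁(x − 12) + Λ₁(x − 13) + Λ₁(x − 14). Then the function v(x) = Λ₁(x) + (1/8)·(v₁(x) + v₁(−x)) + (1/16)·(v₂(x) + v₂(−x)) is a continuous positive definite function on ℝ. -/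
open Complex MeasureTheory Set Pointwise ComplexOrder

noncomputable section

/-- The truncated power function `Λ_α(x) = (max (1 - |x|) 0) ^ α`
(for natural `α`; note `Λ₁ = Lam 1` and `Λ₁ ^ n = Λ_n`). -/
def Lam (α : ℕ) (x : ℝ) : ℝ := (max (1 - |x|) 0) ^ α

/-! ### Auxiliary lemmas -/

lemma lam_neg (y : ℝ) : Lam 1 (-y) = Lam 1 y := by
  unfold Lam; rw [abs_neg]

lemma lam_continuous : Continuous (Lam 1) := by
  unfold Lam
  exact ((continuous_const.sub (_root_.continuous_abs : Continuous fun x : ℝ => |x|)).max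
    continuous_const).pow 1

lemma ind_shift (a t : ℝ) :
    (Icc (0:ℝ) 1).indicator 1 (t + a) = (Icc (-a) (1-a)).indicator (1 : ℝ → ℝ) t := by
  rw [Set.indicator_apply, Set.indicator_apply]
  refine if_congr ?_ rfl rfl
  simp only [mem_Icc]
  constructor <;> intro h <;> constructor <;> linarith [h.1, h.2]

lemma ind_prod (a b t : ℝ) :
    (Icc (0:ℝ) 1).indicator 1 (t + a) * (Icc (0:ℝ) 1).indicator 1 (t + b)
      = (Icc (max (-a) (-b)) (min (1-a) (1-b))).indicator (1 : ℝ → ℝ) t := by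
  rw [ind_shift, ind_shift, ← Set.Icc_inter_Icc, Set.inter_indicator_one]
  rfl

lemma autocorr (a b : ℝ) :
    (∫ t, (Icc (0:ℝ) 1).indicator 1 (t + a) * (Icc (0:ℝ) 1).indicator 1 (t + b))
      = Lam 1 (a - b) := by
  have h : (fun t => (Icc (0:ℝ) 1).indicator 1 (t + a) * (Icc (0:ℝ) 1).indicator 1 (t + b))
      = (Icc (max (-a) (-b)) (min (1-a) (1-b))).indicator (1 : ℝ → ℝ) :=
    funext fun t => ind_prod a b t
  rw [h, MeasureTheory.integral_indicator_one measurableSet_Icc, Real.volume_real_Icc]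
  unfold Lam
  rw [pow_one]
  congr 1
  rcases le_total a b with hab | hab
  · rw [_root_.abs_of_nonpos (by linarith : a - b ≤ 0), max_eq_left (by linarith : -b ≤ -a),
      min_eq_right (by linarith : 1 - b ≤ 1 - a)]
    ring
  · rw [_root_.abs_of_nonneg (by linarith : (0:ℝ) ≤ a - b), max_eq_right (by linarith : -a ≤ -b),
      min_eq_left (by linarith : 1 - a ≤ 1 - b)]
    ring

lemma ind_integrable (a b : ℝ) :
    Integrable (fun t => (Icc (0:ℝ) 1).indicator (1 : ℝ → ℝ) (t + a)
      * (Icc (0:ℝ) 1).indicator (1 : ℝ → ℝ) (t + b)) volume := by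
  have h : (fun t => (Icc (0:ℝ) 1).indicator 1 (t + a) * (Icc (0:ℝ) 1).indicator 1 (t + b))
      = (Icc (max (-a) (-b)) (min (1-a) (1-b))).indicator (1 : ℝ → ℝ) :=
    funext fun t => ind_prod a b t
  rw [h]
  have hc : IntegrableOn (fun _ : ℝ => (1 : ℝ))
      (Icc (max (-a) (-b)) (min (1-a) (1-b))) volume := by
    rw [integrableOn_const_iff]
    exact Or.inr measure_Icc_lt_top
  exact (integrable_indicator_iff measurableSet_Icc).2 hc

lemma lam_posdef : IsPosDefFn (fun x => ((Lam 1 x : ℝ) : ℂ)) := by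
  intro m x c
  set φ : Fin m → ℝ → ℝ := fun j t => (Icc (0:ℝ) 1).indicator 1 (t + x j) with hφ
  -- each term is an integral
  have key : ∀ j k : Fin m, ((Lam 1 (x j - x k) : ℝ) : ℂ) * c j * (starRingEnd ℂ) (c k)
      = ∫ t, (c j * ((φ j t : ℝ) : ℂ)) * (starRingEnd ℂ) (c k * ((φ k t : ℝ) : ℂ)) := by
    intro j k
    have e : ∀ t : ℝ, (c j * ((φ j t : ℝ) : ℂ)) * (starRingEnd ℂ) (c k * ((φ k t : ℝ) : ℂ))
        = (c j * (starRingEnd ℂ) (c k)) * ((φ j t * φ k t : ℝ) : ℂ) := by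
      intro t
      simp [map_mul, Complex.conj_ofReal]
      ring
    have hI : (∫ t, ((φ j t * φ k t : ℝ) : ℂ)) = ((∫ t, φ j t * φ k t : ℝ) : ℂ) :=
      integral_ofReal
    rw [funext e, integral_const_mul, hI]
    simp only [hφ]
    rw [autocorr]
    ring
  have hsum : (∑ j, ∑ k, ((Lam 1 (x j - x k) : ℝ) : ℂ) * c j * (starRingEnd ℂ) (c k))
      = ∫ t, (∑ j, c j * ((φ j t : ℝ) : ℂ)) * (starRingEnd ℂ) (∑ k, c k * ((φ k t : ℝ) : ℂ)) := by
    have hint : ∀ j k : Fin m, Integrable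
        (fun t => (c j * ((φ j t : ℝ) : ℂ)) * (starRingEnd ℂ) (c k * ((φ k t : ℝ) : ℂ))) := by
      intro j k
      have e : (fun t => (c j * ((φ j t : ℝ) : ℂ)) * (starRingEnd ℂ) (c k * ((φ k t : ℝ) : ℂ)))
          = fun t => (c j * (starRingEnd ℂ) (c k)) * ((φ j t * φ k t : ℝ) : ℂ) := by
        funext t
        simp [map_mul, Complex.conj_ofReal]
        ring
      rw [e]
      exact ((ind_integrable (x j) (x k)).ofReal.const_mul _)
    calc (∑ j, ∑ k, ((Lam 1 (x j - x k) : ℝ) : ℂ) * c j * (starRingEnd ℂ) (c k))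
        = ∑ j, ∑ k, ∫ t, (c j * ((φ j t : ℝ) : ℂ)) * (starRingEnd ℂ) (c k * ((φ k t : ℝ) : ℂ)) := by
          exact Finset.sum_congr rfl fun j _ => Finset.sum_congr rfl fun k _ => key j k
      _ = ∫ t, ∑ j, ∑ k, (c j * ((φ j t : ℝ) : ℂ)) * (starRingEnd ℂ) (c k * ((φ k t : ℝ) : ℂ)) := by
          rw [MeasureTheory.integral_finset_sum _ fun j _ =>
            MeasureTheory.integrable_finset_sum _ fun k _ => hint j k]
          exact Finset.sum_congr rfl fun j _ =>
            (MeasureTheory.integral_finset_sum _ fun k _ => hint j k).symm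
      _ = ∫ t, (∑ j, c j * ((φ j t : ℝ) : ℂ)) * (starRingEnd ℂ) (∑ k, c k * ((φ k t : ℝ) : ℂ)) := by
          congr 1
          funext t
          rw [map_sum, Finset.sum_mul_sum]
  rw [hsum]
  have : (fun t => (∑ j, c j * ((φ j t : ℝ) : ℂ)) * (starRingEnd ℂ) (∑ k, c k * ((φ k t : ℝ) : ℂ)))
      = fun t => ((Complex.normSq (∑ j, c j * ((φ j t : ℝ) : ℂ)) : ℝ) : ℂ) := by
    funext t
    rw [Complex.mul_conj]
  rw [this]
  have h2 : (∫ t, ((Complex.normSq (∑ j, c j * ((φ j t : ℝ) : ℂ)) : ℝ) : ℂ))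
      = ((∫ t, Complex.normSq (∑ j, c j * ((φ j t : ℝ) : ℂ)) : ℝ) : ℂ) := integral_ofReal
  rw [h2]
  exact Complex.zero_le_real.2 (integral_nonneg fun t => Complex.normSq_nonneg _)

lemma posdef_shift (f : ℝ → ℂ) (hf : IsPosDefFn f) (a : ℝ) :
    IsPosDefFn (fun x => 2 * f x + f (x - a) + f (x + a)) := by
  intro m x c
  have h := hf (m + m) (Fin.append x (fun i => x i + a)) (Fin.append c c)
  simp only [Fin.sum_univ_add, Fin.append_left, Fin.append_right] at h
  have e : (∑ j, ∑ k, (2 * f (x j - x k) + f (x j - x k - a) + f (x j - x k + a))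
        * c j * (starRingEnd ℂ) (c k))
      = ((∑ j : Fin m, ((∑ k : Fin m, f (x j - x k) * c j * (starRingEnd ℂ) (c k))
          + ∑ k : Fin m, f (x j - (x k + a)) * c j * (starRingEnd ℂ) (c k)))
        + (∑ j : Fin m, ((∑ k : Fin m, f (x j + a - x k) * c j * (starRingEnd ℂ) (c k))
          + ∑ k : Fin m, f (x j + a - (x k + a)) * c j * (starRingEnd ℂ) (c k)))) := by
    have harg : ∀ j k : Fin m, x j + a - (x k + a) = x j - x k := fun j k => by ring
    have harg2 : ∀ j k : Fin m, x j - (x k + a) = x j - x k - a := fun j k => by ring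
    simp only [harg, harg2]
    rw [← Finset.sum_add_distrib]
    refine Finset.sum_congr rfl fun j _ => ?_
    rw [← Finset.sum_add_distrib, ← Finset.sum_add_distrib, ← Finset.sum_add_distrib]
    refine Finset.sum_congr rfl fun k _ => ?_
    ring
  rw [e]
  exact h

lemma posdef_add {f g : ℝ → ℂ} (hf : IsPosDefFn f) (hg : IsPosDefFn g) :
    IsPosDefFn (fun x => f x + g x) := by
  intro m x c
  have h := add_nonneg (hf m x c) (hg m x c)
  simpa [add_mul, Finset.sum_add_distrib] using h

lemma posdef_smul {f : ℝ → ℂ} (r : ℝ) (hr : 0 ≤ r) (hf : IsPosDefFn f) :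
    IsPosDefFn (fun x => (r : ℂ) * f x) := by
  intro m x c
  have h := hf m x c
  have e : (∑ j, ∑ k, ((r : ℂ) * f (x j - x k)) * c j * (starRingEnd ℂ) (c k))
      = (r : ℂ) * ∑ j, ∑ k, f (x j - x k) * c j * (starRingEnd ℂ) (c k) := by
    rw [Finset.mul_sum]
    refine Finset.sum_congr rfl fun j _ => ?_
    rw [Finset.mul_sum]
    refine Finset.sum_congr rfl fun k _ => ?_
    ring
  rw [e]
  exact mul_nonneg (Complex.zero_le_real.2 hr) h

theorem v_continuous_posDef :
    let v₁ : ℝ → ℝ := fun x =>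
      Lam 1 (x - Real.pi - 1) + Lam 1 (x - 2 * Real.pi + 1)
    let v₂ : ℝ → ℝ := fun x =>
      Lam 1 (x - 11) + Lam 1 (x - 12) + Lam 1 (x - 13) + Lam 1 (x - 14)
    let v : ℝ → ℝ := fun x =>
      Lam 1 x + (1 / 8) * (v₁ x + v₁ (-x)) + (1 / 16) * (v₂ x + v₂ (-x))
    Continuous v ∧ IsPosDefFn (fun x => ((v x : ℝ) : ℂ)) := by
  intro v₁ v₂ v
  have hΛ := lam_continuous
  constructor
  · show Continuous fun x =>
      Lam 1 x + (1 / 8) * (v₁ x + v₁ (-x)) + (1 / 16) * (v₂ x + v₂ (-x))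
    have hv₁ : Continuous v₁ := by
      apply Continuous.add <;> exact hΛ.comp (by continuity)
    have hv₂ : Continuous v₂ := by
      apply Continuous.add
      apply Continuous.add
      apply Continuous.add
      all_goals exact hΛ.comp (by continuity)
    continuity
  · -- positive definiteness
    set g : ℝ → ℝ → ℂ := fun a x =>
      2 * ((Lam 1 x : ℝ) : ℂ) + ((Lam 1 (x - a) : ℝ) : ℂ) + ((Lam 1 (x + a) : ℝ) : ℂ) with hg
    have hga : ∀ a : ℝ, IsPosDefFn (g a) := fun a => by
      have := posdef_shift (fun x => ((Lam 1 x : ℝ) : ℂ)) lam_posdef a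
      exact this
    set w : ℝ → ℂ := fun x =>
      (1/8 : ℝ) * (g (Real.pi + 1) x + g (2 * Real.pi - 1) x)
        + (1/16 : ℝ) * (g 11 x + g 12 x + g 13 x + g 14 x) with hw
    have hwpd : IsPosDefFn w := by
      apply posdef_add
      · exact posdef_smul _ (by norm_num) (posdef_add (hga _) (hga _))
      · exact posdef_smul _ (by norm_num)
          (posdef_add (posdef_add (posdef_add (hga _) (hga _)) (hga _)) (hga _))
    have hvw : (fun x => ((v x : ℝ) : ℂ)) = w := by
      funext x
      show (((Lam 1 x + (1 / 8) * (v₁ x + v₁ (-x)) + (1 / 16) * (v₂ x + v₂ (-x)) : ℝ)) : ℂ) = w x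
      have h1 : Lam 1 (-x - Real.pi - 1) = Lam 1 (x + (Real.pi + 1)) := by
        rw [show -x - Real.pi - 1 = -(x + (Real.pi + 1)) by ring, lam_neg]
      have h2 : Lam 1 (-x - 2 * Real.pi + 1) = Lam 1 (x + (2 * Real.pi - 1)) := by
        rw [show -x - 2 * Real.pi + 1 = -(x + (2 * Real.pi - 1)) by ring, lam_neg]
      have h3 : Lam 1 (-x - 11) = Lam 1 (x + 11) := by
        rw [show -x - 11 = -(x + 11) by ring, lam_neg]
      have h4 : Lam 1 (-x - 12) = Lam 1 (x + 12) := by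
        rw [show -x - 12 = -(x + 12) by ring, lam_neg]
      have h5 : Lam 1 (-x - 13) = Lam 1 (x + 13) := by
        rw [show -x - 13 = -(x + 13) by ring, lam_neg]
      have h6 : Lam 1 (-x - 14) = Lam 1 (x + 14) := by
        rw [show -x - 14 = -(x + 14) by ring, lam_neg]
      have h7 : x - Real.pi - 1 = x - (Real.pi + 1) := by ring
      have h8 : x - 2 * Real.pi + 1 = x - (2 * Real.pi - 1) := by ring
      simp only [v₁, v₂, hw, hg, h1, h2, h3, h4, h5, h6, h7, h8]
      push_cast
      ring
    rw [hvw]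
    exact hwpd
end
end
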